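/- Let X, V, W, Y be real Banach spaces, L : X → W and C : V → Y continuous linear maps, Â : V → W a map, and S : X → V a map satisfying Â(S x') + L x' = 0 for every x' ∈ X. Let x, x̃ ∈ X, assume S is Fréchet differentiable at x and at x̃, and assume Â is Fréchet differentiable at S x and at S x̃ with derivatives G := Â'(S x) and G̃ := Â'(S x̃) that are continuous linear isomorphisms from V onto W. Assume furthermore that L admits a continuous linear right inverse L† : W → X with L ∘ L† = Id_W (corresponding to surjectivity of L). Then the reduced forward operator F := C ∘ S is Fréchet differentiable at x and x̃ with F'(x) = −C ∘ G⁻¹ ∘ L and F'(x̃) = −C ∘ G̃⁻¹ ∘ L, and the reduced range invariance condition F'(x̃) = F'(x) ∘ R holds with R := L† ∘ G ∘ G̃⁻¹ ∘ L. -/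

import Mathlib

lemma reduced_deriv_aux
    {X V Y W : Type*}
    [NormedAddCommGroup X] [NormedSpace ℝ X]
    [NormedAddCommGroup V] [NormedSpace ℝ V]
    [NormedAddCommGroup W] [NormedSpace ℝ W]
    [NormedAddCommGroup Y] [NormedSpace ℝ Y]
    (L : X →L[ℝ] W) (C : V →L[ℝ] Y) (Ahat : V → W) (S : X → V)
    (hmodel : ∀ x' : X, Ahat (S x') + L x' = 0)
    (x : X) (hSx : DifferentiableAt ℝ S x)
    (G : V ≃L[ℝ] W)
    (hG : HasFDerivAt Ahat (G : V →L[ℝ] W) (S x)) :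
    HasFDerivAt (fun x' => C (S x')) (-(C.comp ((G.symm : W →L[ℝ] V).comp L))) x := by
  set S' := fderiv ℝ S x with hS'
  have hSder : HasFDerivAt S S' x := hSx.hasFDerivAt
  have h1 : HasFDerivAt (fun x' => Ahat (S x')) ((G : V →L[ℝ] W).comp S') x :=
    hG.comp x hSder
  have h2 : HasFDerivAt (fun x' => Ahat (S x')) (-L) x := by
    have heq : (fun x' : X => Ahat (S x')) = fun x' => -(L x') := by
      funext x'; exact eq_neg_of_add_eq_zero_left (hmodel x')
    rw [heq]; exact (L.hasFDerivAt).neg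
  have huniq : (G : V →L[ℝ] W).comp S' = -L := h1.unique h2
  have hS'eq : S' = -((G.symm : W →L[ℝ] V).comp L) := by
    ext v
    have := congrArg (fun (T : X →L[ℝ] W) => G.symm (T v)) huniq
    simpa using this
  have := C.hasFDerivAt.comp x hSder
  convert this using 1
  · rfl
  rw [hS'eq]
  ext v; simp

/-- Lemma 5.1(d): reduced range invariance.  For the model
`A(x,u) = Â(u) + L x` with parameter-to-state map `S` (i.e. `Â(S x') + L x' = 0`
for all `x'`), if the state derivatives `G = Â'(S x)`, `G̃ = Â'(S x̃)` are
isomorphisms and `L` has a bounded right inverse `L†`, then the reduced forward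
operator `F = C ∘ S` has derivatives `F'(x) = −C ∘ G⁻¹ ∘ L`,
`F'(x̃) = −C ∘ G̃⁻¹ ∘ L`, and `F'(x̃) = F'(x) ∘ R` with `R = L† ∘ G ∘ G̃⁻¹ ∘ L`. -/
theorem reduced_range_invariance
    {X V W Y : Type*}
    [NormedAddCommGroup X] [NormedSpace ℝ X] [CompleteSpace X]
    [NormedAddCommGroup V] [NormedSpace ℝ V] [CompleteSpace V]
    [NormedAddCommGroup W] [NormedSpace ℝ W] [CompleteSpace W]
    [NormedAddCommGroup Y] [NormedSpace ℝ Y] [CompleteSpace Y]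
    (L : X →L[ℝ] W) (C : V →L[ℝ] Y) (Ahat : V → W) (S : X → V)
    (hmodel : ∀ x' : X, Ahat (S x') + L x' = 0)
    (x xtilde : X)
    (hSx : DifferentiableAt ℝ S x) (hSxtilde : DifferentiableAt ℝ S xtilde)
    (G Gtilde : V ≃L[ℝ] W)
    (hG : HasFDerivAt Ahat (G : V →L[ℝ] W) (S x))
    (hGtilde : HasFDerivAt Ahat (Gtilde : V →L[ℝ] W) (S xtilde))
    (Ldag : W →L[ℝ] X) (hLdag : L.comp Ldag = ContinuousLinearMap.id ℝ W)
    (R : X →L[ℝ] X)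
    (hR : R = Ldag.comp (((G : V →L[ℝ] W)).comp
            ((Gtilde.symm : W →L[ℝ] V).comp L))) :
    HasFDerivAt (fun x' => C (S x'))
      (-(C.comp ((G.symm : W →L[ℝ] V).comp L))) x ∧
    HasFDerivAt (fun x' => C (S x'))
      (-(C.comp ((Gtilde.symm : W →L[ℝ] V).comp L))) xtilde ∧
    -(C.comp ((Gtilde.symm : W →L[ℝ] V).comp L)) =
      (-(C.comp ((G.symm : W →L[ℝ] V).comp L))).comp R := by
  refine ⟨reduced_deriv_aux L C Ahat S hmodel x hSx G hG,
    reduced_deriv_aux L C Ahat S hmodel xtilde hSxtilde Gtilde hGtilde, ?_⟩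
  subst hR
  ext v
  have hLL : ∀ w : W, L (Ldag w) = w := fun w =>
    congrArg (fun T : W →L[ℝ] W => T w) hLdag
  simp [hLL]
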